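/- Let Z be a special symbol of defect 1 and size (m+1,m) and Z' a special symbol of defect 0 and size (m',m') with m' = m or m' = m+1, and suppose D_{Z,Z'} ≠ ∅. Then: (i) there is a union Ψ'_0 of pairwise disjoint consecutive pairs in Z'_I such that D_Z = {Λ_{Ψ'} : Ψ' ≤ Ψ'_0}; (ii) there is a union Ψ_0 of pairwise disjoint consecutive pairs in Z_I such that D_{Z'} = {Λ_Ψ : Ψ ≤ Ψ_0}. -/

import Mathlib

open scoped symmDiff

/-- A symbol: a pair of finsets of naturals (its two rows, each read in
strictly decreasing order). -/
abbrev Symb :=  Finset ℕ × Finset ℕ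

/-- The strictly decreasing enumeration of a finset of naturals. -/
def rowList (s : Finset ℕ) : List ℕ := (s.sort (· ≤ ·)).reverse

/-- The `i`-th entry (0-based) of the strictly decreasing enumeration of `s`. -/
def ent (s : Finset ℕ) (i : ℕ) : Option ℕ := (rowList s)[i]?

/-- Impose a relation on two optional entries whenever both exist. -/
def oRel (r : ℕ → ℕ → Prop) : Option ℕ → Option ℕ → Prop
  | some x, some y => r x y
  | _, _ => True

/-- `Z` is a special symbol of defect 1 and size `(m+1, m)`. -/
def IsSpecial1 (Z : Symb) (m : ℕ) : Prop :=
  Z.1.card = m + 1 ∧ Z.2.card = m ∧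
  (∀ i, oRel (· ≥ ·) (ent Z.1 i) (ent Z.2 i)) ∧
  (∀ i, oRel (· ≥ ·) (ent Z.2 i) (ent Z.1 (i + 1)))

/-- `Z'` is a special symbol of defect 0 and size `(m', m')`. -/
def IsSpecial0 (Z : Symb) (m' : ℕ) : Prop :=
  Z.1.card = m' ∧ Z.2.card = m' ∧
  (∀ i, oRel (· ≥ ·) (ent Z.1 i) (ent Z.2 i)) ∧
  (∀ i, oRel (· ≥ ·) (ent Z.2 i) (ent Z.1 (i + 1)))

/-- `Z_I`: the entries of `Z` lying in exactly one row (row remembered). -/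
def ZI (Z : Symb) : Symb := (Z.1 \ Z.2, Z.2 \ Z.1)

/-- `M` is a subset of `Z_I`. -/
def SubZI (M Z : Symb) : Prop := M.1 ⊆ Z.1 \ Z.2 ∧ M.2 ⊆ Z.2 \ Z.1

/-- `Z` is regular: no degenerate entries. -/
def Regular (Z : Symb) : Prop := Disjoint Z.1 Z.2

/-- `Λ_M`: exchange the rows of the entries of `M`. -/
def lam (Z M : Symb) : Symb := ((Z.1 \ M.1) ∪ M.2, (Z.2 \ M.2) ∪ M.1)

/-- `S̄_Z = {Λ_M : M ⊆ Z_I}`. -/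
def Sbar (Z : Symb) : Set Symb := {Λ | ∃ M, SubZI M Z ∧ Λ = lam Z M}

/-- Size and inequality conditions of `B̄⁺_{Z,Z'}` in the case `m' = m`. -/
def Bm (Λ Λ' : Symb) : Prop :=
  Λ'.1.card = Λ.2.card ∧ Λ'.2.card + 1 = Λ.1.card ∧
  (∀ i, oRel (· > ·) (ent Λ.1 i) (ent Λ'.2 i)) ∧
  (∀ i, oRel (· ≥ ·) (ent Λ'.2 i) (ent Λ.1 (i + 1))) ∧
  (∀ i, oRel (· > ·) (ent Λ.2 i) (ent Λ'.1 (i + 1))) ∧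
  (∀ i, oRel (· ≥ ·) (ent Λ'.1 i) (ent Λ.2 i))

/-- Size and inequality conditions of `B̄⁺_{Z,Z'}` in the case `m' = m + 1`. -/
def Bm1 (Λ Λ' : Symb) : Prop :=
  Λ'.1.card = Λ.2.card + 1 ∧ Λ'.2.card = Λ.1.card ∧
  (∀ i, oRel (· ≥ ·) (ent Λ.1 i) (ent Λ'.2 i)) ∧
  (∀ i, oRel (· > ·) (ent Λ'.2 i) (ent Λ.1 (i + 1))) ∧
  (∀ i, oRel (· ≥ ·) (ent Λ.2 i) (ent Λ'.1 (i + 1))) ∧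
  (∀ i, oRel (· > ·) (ent Λ'.1 i) (ent Λ.2 i))

/-- The relation `B̄⁺_{Z,Z'}`. -/
def BbarPlus (Z Z' : Symb) (m m' : ℕ) (Λ Λ' : Symb) : Prop :=
  Λ ∈ Sbar Z ∧ Λ' ∈ Sbar Z' ∧
  ((m' = m ∧ Bm Λ Λ') ∨ (m' = m + 1 ∧ Bm1 Λ Λ'))

/-- The relation `D_{Z,Z'}`. -/
def DRel (Z Z' : Symb) (m m' : ℕ) (A A' : Symb) : Prop :=
  BbarPlus Z Z' m m' A A' ∧
  A.1.card = m + 1 ∧ A.2.card = m ∧ A'.1.card = m' ∧ A'.2.card = m'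

/-- `{c, d}` is a consecutive pair in `Z_I`. -/
def ConsecPair (Z : Symb) (c d : ℕ) : Prop :=
  c ∈ Z.1 \ Z.2 ∧ d ∈ Z.2 \ Z.1 ∧
  ∀ x ∈ (Z.1 \ Z.2) ∪ (Z.2 \ Z.1), ¬(min c d < x ∧ x < max c d)

def cge (s : Finset ℕ) (t : ℕ) : ℕ := (s.filter (fun y => t ≤ y)).card

lemma cge_mono (s : Finset ℕ) {t t' : ℕ} (h : t ≤ t') : cge s t' ≤ cge s t := by
  apply Finset.card_le_card
  intro x hx
  simp only [Finset.mem_filter] at *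
  exact ⟨hx.1, h.trans hx.2⟩

lemma cge_le_card (s : Finset ℕ) (t : ℕ) : cge s t ≤ s.card :=
  Finset.card_le_card (Finset.filter_subset _ _)

lemma cge_zero (s : Finset ℕ) : cge s 0 = s.card := by
  unfold cge
  rw [Finset.filter_true_of_mem (fun x _ => Nat.zero_le x)]

lemma cge_succ_mem (s : Finset ℕ) {x : ℕ} (hx : x ∈ s) :
    cge s x = cge s (x + 1) + 1 := by
  unfold cge
  have : s.filter (fun y => x ≤ y) = insert x (s.filter (fun y => x + 1 ≤ y)) := by
    ext y
    simp only [Finset.mem_filter, Finset.mem_insert]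
    constructor
    · rintro ⟨hy, hxy⟩
      rcases eq_or_lt_of_le hxy with h | h
      · exact Or.inl h.symm
      · exact Or.inr ⟨hy, h⟩
    · rintro (rfl | ⟨hy, hxy⟩)
      · exact ⟨hx, le_refl _⟩
      · exact ⟨hy, by omega⟩
  rw [this, Finset.card_insert_of_notMem (by simp)]

lemma cge_succ_not_mem (s : Finset ℕ) {x : ℕ} (hx : x ∉ s) :
    cge s x = cge s (x + 1) := by
  unfold cge
  congr 1
  apply Finset.filter_congr
  intro y hy
  constructor
  · intro h
    rcases eq_or_lt_of_le h with h | h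
    · exact absurd (h ▸ hy) hx
    · exact h
  · omega

lemma cge_exists {s : Finset ℕ} {t t' : ℕ} (h : cge s t' < cge s t) :
    ∃ u ∈ s, t ≤ u ∧ u < t' := by
  by_contra hc
  push_neg at hc
  have : s.filter (fun y => t ≤ y) ⊆ s.filter (fun y => t' ≤ y) := by
    intro x hx
    simp only [Finset.mem_filter] at *
    exact ⟨hx.1, hc x hx.1 hx.2⟩
  have := Finset.card_le_card this
  unfold cge at h
  omega

lemma rowList_sorted (s : Finset ℕ) : (rowList s).Pairwise (· > ·) := by
  unfold rowList
  rw [List.pairwise_reverse]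
  exact List.sortedLT_iff_pairwise.mp (Finset.sortedLT_sort s)

lemma rowList_nodup (s : Finset ℕ) : (rowList s).Nodup :=
  List.nodup_reverse.mpr (Finset.sort_nodup s _)

lemma rowList_toFinset (s : Finset ℕ) : (rowList s).toFinset = s := by
  unfold rowList
  rw [List.toFinset_reverse, Finset.sort_toFinset]

lemma length_rowList (s : Finset ℕ) : (rowList s).length = s.card := by
  unfold rowList
  rw [List.length_reverse, Finset.length_sort]

lemma cge_eq_length (s : Finset ℕ) (t : ℕ) :
    cge s t = ((rowList s).filter (fun y => decide (t ≤ y))).length := by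
  have h1 : ((rowList s).filter (fun y => decide (t ≤ y))).toFinset
      = s.filter (fun y => t ≤ y) := by
    rw [List.toFinset_filter, rowList_toFinset]
    apply Finset.filter_congr
    intro y _
    simp
  have h2 : ((rowList s).filter (fun y => decide (t ≤ y))).Nodup :=
    (rowList_nodup s).filter _
  rw [cge, ← h1, List.toFinset_card_of_nodup h2]

lemma rank_aux : ∀ (l : List ℕ), l.Pairwise (· > ·) → ∀ (i x : ℕ), l[i]? = some x →
    (l.filter (fun y => decide (x + 1 ≤ y))).length = i ∧
    (l.filter (fun y => decide (x ≤ y))).length = i + 1 := by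
  intro l
  induction l with
  | nil => intro _ i x h; simp at h
  | cons a tl ih =>
    intro hs i x h
    have hlt : ∀ b ∈ tl, b < a := fun b hb => List.rel_of_pairwise_cons hs hb
    cases i with
    | zero =>
      simp only [List.getElem?_cons_zero, Option.some.injEq] at h
      subst h
      have h0 : List.filter (fun y => decide (a + 1 ≤ y)) tl = [] := by
        rw [List.filter_eq_nil_iff]
        intro b hb
        have := hlt b hb
        simp only [decide_eq_true_eq]
        omega
      have h1 : List.filter (fun y => decide (a ≤ y)) tl = [] := by
        rw [List.filter_eq_nil_iff]
        intro b hb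
        have := hlt b hb
        simp only [decide_eq_true_eq]
        omega
      constructor
      · simp only [List.filter_cons, h0]; simp
      · simp [List.filter_cons, h1]
    | succ i =>
      simp only [List.getElem?_cons_succ] at h
      have hx : x ∈ tl := by
        have := List.getElem?_eq_some_iff.mp h
        obtain ⟨hlen, hget⟩ := this
        exact hget ▸ List.getElem_mem _
      have hax : x < a := hlt x hx
      obtain ⟨h1, h2⟩ := ih hs.of_cons i x h
      constructor
      · simp only [List.filter_cons]
        have : decide (x + 1 ≤ a) = true := by simp; omega
        rw [this]
        rw [if_pos rfl, List.length_cons, h1]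
      · simp only [List.filter_cons]
        have : decide (x ≤ a) = true := by simp; omega
        rw [this]
        simp [h2]

lemma ent_cge {s : Finset ℕ} {i x : ℕ} (h : ent s i = some x) :
    cge s (x + 1) = i ∧ cge s x = i + 1 ∧ x ∈ s := by
  obtain ⟨h1, h2⟩ := rank_aux (rowList s) (rowList_sorted s) i x h
  refine ⟨by rw [cge_eq_length]; exact h1, by rw [cge_eq_length]; exact h2, ?_⟩
  rw [← rowList_toFinset s, List.mem_toFinset]
  have := List.getElem?_eq_some_iff.mp h
  obtain ⟨hlen, hget⟩ := this
  exact hget ▸ List.getElem_mem _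

lemma ent_exists {s : Finset ℕ} {i : ℕ} (h : i < s.card) : ∃ x, ent s i = some x := by
  unfold ent
  rw [← length_rowList] at h
  exact ⟨_, List.getElem?_eq_getElem h⟩

lemma le_of_cge {s : Finset ℕ} {i x t : ℕ} (h : ent s i = some x)
    (hc : i + 1 ≤ cge s t) : t ≤ x := by
  by_contra hlt
  push_neg at hlt
  have h1 := (ent_cge h).1
  have := cge_mono s (show x + 1 ≤ t by omega)
  omega

lemma ent_of_cge {s : Finset ℕ} {t k : ℕ} (hk : 0 < k) (h : k ≤ cge s t) :
    ∃ x, ent s (k - 1) = some x ∧ t ≤ x := by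
  have hcard : k - 1 < s.card := by
    have := cge_le_card s t
    omega
  obtain ⟨x, hx⟩ := ent_exists hcard
  exact ⟨x, hx, le_of_cge hx (by omega)⟩

section
variable {A B : Finset ℕ}

lemma oRel_somes {r : ℕ → ℕ → Prop} {x y : ℕ} (h : oRel r (some x) (some y)) : r x y := h

lemma geFwd (hcard : B.card ≤ A.card)
    (h : ∀ i, oRel (· ≥ ·) (ent A i) (ent B i)) (t : ℕ) : cge B t ≤ cge A t := by
  rcases Nat.eq_zero_or_pos (cge B t) with h0 | h0
  · omega
  obtain ⟨x, hx, htx⟩ := ent_of_cge h0 (le_refl _)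
  have hiA : cge B t - 1 < A.card := by
    have := cge_le_card B t
    omega
  obtain ⟨y, hy⟩ := ent_exists hiA
  have hr := h (cge B t - 1)
  rw [hx, hy] at hr
  have hxy : y ≥ x := hr
  have := (ent_cge hy).2.1
  have := cge_mono A (show t ≤ y by omega)
  omega

lemma gtFwd (hcard : B.card ≤ A.card)
    (h : ∀ i, oRel (· > ·) (ent A i) (ent B i)) (t : ℕ) : cge B t ≤ cge A (t + 1) := by
  rcases Nat.eq_zero_or_pos (cge B t) with h0 | h0
  · omega
  obtain ⟨x, hx, htx⟩ := ent_of_cge h0 (le_refl _)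
  have hiA : cge B t - 1 < A.card := by
    have := cge_le_card B t
    omega
  obtain ⟨y, hy⟩ := ent_exists hiA
  have hr := h (cge B t - 1)
  rw [hx, hy] at hr
  have hxy : y > x := hr
  have := (ent_cge hy).2.1
  have := cge_mono A (show t + 1 ≤ y by omega)
  omega

lemma shFwd (hcard : A.card ≤ B.card + 1)
    (h : ∀ i, oRel (· ≥ ·) (ent B i) (ent A (i + 1))) (t : ℕ) :
    cge A t ≤ cge B t + 1 := by
  rcases Nat.lt_or_ge (cge A t) 2 with h0 | h0
  · omega
  obtain ⟨x, hx, htx⟩ := ent_of_cge (show 0 < cge A t by omega) (le_refl _)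
  have hiB : cge A t - 2 < B.card := by
    have := cge_le_card A t
    omega
  obtain ⟨y, hy⟩ := ent_exists hiB
  have hr := h (cge A t - 2)
  have he : cge A t - 2 + 1 = cge A t - 1 := by omega
  rw [he, hx, hy] at hr
  have hxy : y ≥ x := hr
  have := (ent_cge hy).2.1
  have := cge_mono B (show t ≤ y by omega)
  omega

lemma shgtFwd (hcard : A.card ≤ B.card + 1)
    (h : ∀ i, oRel (· > ·) (ent B i) (ent A (i + 1))) (t : ℕ) :
    cge A t ≤ cge B (t + 1) + 1 := by
  rcases Nat.lt_or_ge (cge A t) 2 with h0 | h0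
  · omega
  obtain ⟨x, hx, htx⟩ := ent_of_cge (show 0 < cge A t by omega) (le_refl _)
  have hiB : cge A t - 2 < B.card := by
    have := cge_le_card A t
    omega
  obtain ⟨y, hy⟩ := ent_exists hiB
  have hr := h (cge A t - 2)
  have he : cge A t - 2 + 1 = cge A t - 1 := by omega
  rw [he, hx, hy] at hr
  have hxy : y > x := hr
  have := (ent_cge hy).2.1
  have := cge_mono B (show t + 1 ≤ y by omega)
  omega

lemma geBwd (h : ∀ t, cge B t ≤ cge A t) (i : ℕ) :
    oRel (· ≥ ·) (ent A i) (ent B i) := by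
  cases hA : ent A i with
  | none => cases hB : ent B i <;> trivial
  | some x =>
    cases hB : ent B i with
    | none => trivial
    | some y =>
      show x ≥ y
      have h1 := (ent_cge hB).2.1
      have h2 := h y
      exact le_of_cge hA (by omega)

lemma gtBwd (h : ∀ t, cge B t ≤ cge A (t + 1)) (i : ℕ) :
    oRel (· > ·) (ent A i) (ent B i) := by
  cases hA : ent A i with
  | none => cases hB : ent B i <;> trivial
  | some x =>
    cases hB : ent B i with
    | none => trivial
    | some y =>
      show x > y
      have h1 := (ent_cge hB).2.1
      have h2 := h y
      have := le_of_cge hA (show i + 1 ≤ cge A (y + 1) by omega)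
      omega

lemma shBwd (h : ∀ t, cge A t ≤ cge B t + 1) (i : ℕ) :
    oRel (· ≥ ·) (ent B i) (ent A (i + 1)) := by
  cases hB : ent B i with
  | none => cases hA : ent A (i+1) <;> trivial
  | some y =>
    cases hA : ent A (i + 1) with
    | none => trivial
    | some x =>
      show y ≥ x
      have h1 := (ent_cge hA).2.1
      have h2 := h x
      exact le_of_cge hB (by omega)

lemma shgtBwd (h : ∀ t, cge A t ≤ cge B (t + 1) + 1) (i : ℕ) :
    oRel (· > ·) (ent B i) (ent A (i + 1)) := by
  cases hB : ent B i with
  | none => cases hA : ent A (i+1) <;> trivial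
  | some y =>
    cases hA : ent A (i + 1) with
    | none => trivial
    | some x =>
      show y > x
      have h1 := (ent_cge hA).2.1
      have h2 := h x
      have := le_of_cge hB (show i + 1 ≤ cge B (x + 1) by omega)
      omega

end

lemma cge_union {A B : Finset ℕ} (h : Disjoint A B) (t : ℕ) :
    cge (A ∪ B) t = cge A t + cge B t := by
  unfold cge
  rw [Finset.filter_union, Finset.card_union_of_disjoint]
  exact Finset.disjoint_filter_filter h

lemma cge_sdiff {A B : Finset ℕ} (h : B ⊆ A) (t : ℕ) :
    cge (A \ B) t + cge B t = cge A t := by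
  unfold cge
  have hfe : (A \ B).filter (fun y => t ≤ y) = A.filter (fun y => t ≤ y) \ B.filter (fun y => t ≤ y) := by
    ext x
    simp only [Finset.mem_filter, Finset.mem_sdiff]
    tauto
  rw [hfe, Finset.card_sdiff_of_subset (Finset.filter_subset_filter _ h)]
  have := Finset.card_le_card (Finset.filter_subset_filter (fun y => t ≤ y) h)
  omega

lemma lam_cge1 {X M : Symb} (h : SubZI M X) (t : ℕ) :
    cge (lam X M).1 t + cge M.1 t = cge X.1 t + cge M.2 t := by
  have hd : Disjoint (X.1 \ M.1) M.2 := by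
    have : Disjoint X.1 M.2 :=
      Finset.disjoint_left.mpr (fun a ha hb => (Finset.mem_sdiff.mp (h.2 hb)).2 ha)
    exact this.mono_left (Finset.sdiff_subset)
  have hs : M.1 ⊆ X.1 := fun a ha => (Finset.mem_sdiff.mp (h.1 ha)).1
  show cge ((X.1 \ M.1) ∪ M.2) t + cge M.1 t = _
  rw [cge_union hd]
  have := cge_sdiff hs t
  omega

lemma lam_cge2 {X M : Symb} (h : SubZI M X) (t : ℕ) :
    cge (lam X M).2 t + cge M.2 t = cge X.2 t + cge M.1 t := by
  have hd : Disjoint (X.2 \ M.2) M.1 := by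
    have : Disjoint X.2 M.1 :=
      Finset.disjoint_left.mpr (fun a ha hb => (Finset.mem_sdiff.mp (h.1 hb)).2 ha)
    exact this.mono_left (Finset.sdiff_subset)
  have hs : M.2 ⊆ X.2 := fun a ha => (Finset.mem_sdiff.mp (h.2 ha)).1
  show cge ((X.2 \ M.2) ∪ M.1) t + cge M.2 t = _
  rw [cge_union hd]
  have := cge_sdiff hs t
  omega

lemma lam_empty (Z : Symb) : lam Z (∅, ∅) = Z := by
  unfold lam
  simp

lemma self_mem_Sbar (Z : Symb) : Z ∈ Sbar Z :=
  ⟨(∅, ∅), ⟨by simp, by simp⟩, (lam_empty Z).symm⟩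

def CCf (sg : ℕ) (Y V : Symb) : Prop := ∀ t,
  cge V.2 t ≤ cge Y.1 (t + 1 - sg) ∧ cge Y.1 t ≤ cge V.2 (t + sg) + 1 ∧
  cge Y.2 t ≤ cge V.1 (t + sg) ∧ cge V.1 t ≤ cge Y.2 (t + 1 - sg) + 1

lemma CCf_swap {sg : ℕ} (hsg : sg ≤ 1) {Y V : Symb} (h : CCf sg Y V) :
    CCf (1 - sg) V Y := by
  intro t
  have e1 : t + 1 - (1 - sg) = t + sg := by omega
  have e2 : t + (1 - sg) = t + 1 - sg := by omega
  rw [e1, e2]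
  exact ⟨(h t).2.2.1, (h t).2.2.2, (h t).1, (h t).2.1⟩

lemma band_card {p0 q0 : ℕ} (hle : p0 ≤ q0) (s : Finset ℕ) :
    (s.filter (fun x => p0 ≤ x ∧ x < q0)).card + cge s q0 = cge s p0 := by
  unfold cge
  rw [← Finset.card_union_of_disjoint]
  · congr 1
    ext x
    simp only [Finset.mem_union, Finset.mem_filter]
    constructor
    · rintro (⟨hx, h1, h2⟩ | ⟨hx, h1⟩)
      · exact ⟨hx, h1⟩
      · exact ⟨hx, by omega⟩
    · rintro ⟨hx, h1⟩
      by_cases hq : x < q0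
      · exact Or.inl ⟨hx, h1, hq⟩
      · exact Or.inr ⟨hx, by omega⟩
  · rw [Finset.disjoint_left]
    intro a ha hb
    simp only [Finset.mem_filter] at ha hb
    omega

lemma matching {EP M1 M2 : Finset ℕ} (h0 : (0 : ℕ) ∈ EP)
    (hpin : ∀ p ∈ EP, cge M1 p = cge M2 p) :
    ∀ c ∈ M1, ∃ d ∈ M2, ∀ p ∈ EP, (p ≤ c ↔ p ≤ d) := by
  intro c hc
  have hne : (EP.filter (fun p => p ≤ c)).Nonempty := ⟨0, by simp [h0]⟩
  set p0 := (EP.filter (fun p => p ≤ c)).max' hne with hp0def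
  have hp0mem := (EP.filter (fun p => p ≤ c)).max'_mem hne
  rw [Finset.mem_filter] at hp0mem
  obtain ⟨hp0EP, hp0c⟩ := hp0mem
  have hmax : ∀ p ∈ EP, p ≤ c → p ≤ p0 := by
    intro p hp hpc
    rw [hp0def]
    apply Finset.le_max'
    simp only [Finset.mem_filter]
    exact ⟨hp, hpc⟩
  rcases (EP.filter (fun p => ¬ p ≤ c)).eq_empty_or_nonempty with hFe | hFne
  · -- no eval point above c
    have h1 : cge M1 p0 = cge M2 p0 := hpin p0 hp0EP
    have hcc : c ∈ M1.filter (fun x => p0 ≤ x) := Finset.mem_filter.mpr ⟨hc, hp0c⟩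
    have hpos : 0 < cge M2 p0 := by
      have : 0 < cge M1 p0 := by
        unfold cge
        exact Finset.card_pos.mpr ⟨c, hcc⟩
      omega
    have : (M2.filter (fun x => p0 ≤ x)).Nonempty := Finset.card_pos.mp hpos
    obtain ⟨d, hd⟩ := this
    rw [Finset.mem_filter] at hd
    refine ⟨d, hd.1, fun p hp => ⟨fun hpc => le_trans (hmax p hp hpc) hd.2, fun _ => ?_⟩⟩
    by_contra hpc
    exact absurd (Finset.mem_filter.mpr ⟨hp, hpc⟩) (by rw [hFe]; simp)
  · set q0 := (EP.filter (fun p => ¬ p ≤ c)).min' hFne with hq0def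
    have hq0mem := (EP.filter (fun p => ¬ p ≤ c)).min'_mem hFne
    rw [Finset.mem_filter] at hq0mem
    obtain ⟨hq0EP, hq0c⟩ := hq0mem
    have hmin : ∀ p ∈ EP, ¬ p ≤ c → q0 ≤ p := by
      intro p hp hpc
      rw [hq0def]
      apply Finset.min'_le
      simp only [Finset.mem_filter]
      exact ⟨hp, hpc⟩
    have hpq : p0 ≤ q0 := by omega
    have hb1 := band_card hpq M1
    have hb2 := band_card hpq M2
    have h1 : cge M1 p0 = cge M2 p0 := hpin p0 hp0EP
    have h2 : cge M1 q0 = cge M2 q0 := hpin q0 hq0EP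
    have hcc : c ∈ M1.filter (fun x => p0 ≤ x ∧ x < q0) :=
      Finset.mem_filter.mpr ⟨hc, hp0c, by omega⟩
    have hpos : 0 < (M2.filter (fun x => p0 ≤ x ∧ x < q0)).card := by
      have : 0 < (M1.filter (fun x => p0 ≤ x ∧ x < q0)).card :=
        Finset.card_pos.mpr ⟨c, hcc⟩
      omega
    obtain ⟨d, hd⟩ := Finset.card_pos.mp hpos
    rw [Finset.mem_filter] at hd
    obtain ⟨hdM, hdp0, hdq0⟩ := hd
    refine ⟨d, hdM, fun p hp => ⟨fun hpc => le_trans (hmax p hp hpc) hdp0, fun hpd => ?_⟩⟩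
    by_contra hpc
    have := hmin p hp hpc
    omega

theorem core (sg : ℕ) (hsg : sg ≤ 1) (X Y : Symb)
    (hX : ∀ t, cge X.2 t ≤ cge X.1 t ∧ cge X.1 t ≤ cge X.2 t + 1)
    (hY : ∀ t, cge Y.2 t ≤ cge Y.1 t ∧ cge Y.1 t ≤ cge Y.2 t + 1)
    (hex : ∃ M N, SubZI M X ∧ SubZI N Y ∧ CCf sg (lam Y N) (lam X M)) :
    ∃ P : Finset (ℕ × ℕ),
      (∀ p ∈ P, ConsecPair X p.1 p.2) ∧
      (∀ p ∈ P, ∀ q ∈ P, p ≠ q → p.1 ≠ q.1 ∧ p.2 ≠ q.2) ∧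
      (∀ V : Symb,
        (V ∈ Sbar X ∧ V.1.card = X.1.card ∧ V.2.card = X.2.card ∧ CCf sg Y V)
        ↔ ∃ Q ⊆ P, V = lam X (Q.image Prod.fst, Q.image Prod.snd)) := by
  classical
  obtain ⟨M0, N0, hM0, hN0, hcc0⟩ := hex
  -- interleaving bounds
  have hG1 : ∀ t, cge X.1 t + cge X.2 t ≤ (cge Y.1 (t+1-sg) + cge Y.2 (t+1-sg)) + 1 := by
    intro t
    have h1 := (hcc0 t).1
    have h4 := (hcc0 t).2.2.2
    have hFV1 := lam_cge1 hM0 t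
    have hFV2 := lam_cge2 hM0 t
    have hEW1 := lam_cge1 hN0 (t+1-sg)
    have hEW2 := lam_cge2 hN0 (t+1-sg)
    omega
  have hG2 : ∀ t, cge Y.1 t + cge Y.2 t ≤ (cge X.1 (t+sg) + cge X.2 (t+sg)) + 1 := by
    intro t
    have h2 := (hcc0 t).2.1
    have h3 := (hcc0 t).2.2.1
    have hFV1 := lam_cge1 hM0 (t+sg)
    have hFV2 := lam_cge2 hM0 (t+sg)
    have hEW1 := lam_cge1 hN0 t
    have hEW2 := lam_cge2 hN0 t
    omega
  have hXcc : CCf sg Y X := by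
    intro t
    refine ⟨?_, ?_, ?_, ?_⟩
    · have := hG1 t; have := hY (t+1-sg); have := hX t; omega
    · have := hG2 t; have := hX (t+sg); have := hY t; omega
    · have := hG2 t; have := hX (t+sg); have := hY t; omega
    · have := hG1 t; have := hY (t+1-sg); have := hX t; omega
  -- evaluation points
  set EP : Finset ℕ := insert 0 ((Y.1 ∪ Y.2).image (fun u => u + sg)) with hEPdef
  have h0EP : (0:ℕ) ∈ EP := Finset.mem_insert_self 0 _
  have hmemEP : ∀ u ∈ Y.1 ∪ Y.2, u + sg ∈ EP := by
    intro u hu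
    exact Finset.mem_insert_of_mem (Finset.mem_image.mpr ⟨u, hu, rfl⟩)
  -- separation
  have hsep : ∀ x' x : ℕ, x' < x →
      ((x ∈ X.1 \ X.2 ∧ x' ∈ X.1 \ X.2) ∨ (x ∈ X.2 \ X.1 ∧ x' ∈ X.2 \ X.1)) →
      ∃ p ∈ EP, p ≤ x ∧ ¬ p ≤ x' := by
    intro x' x hlt hcase
    have key : cge Y.1 (x+1-sg) + cge Y.2 (x+1-sg)
        < cge Y.1 (x'+1-sg) + cge Y.2 (x'+1-sg) := by
      have hG1x' := hG1 x'
      have hG2x := hG2 (x + 1 - sg)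
      have he : (x + 1 - sg) + sg = x + 1 := by omega
      rw [he] at hG2x
      rcases hcase with ⟨hx, hx'⟩ | ⟨hx, hx'⟩
      · rw [Finset.mem_sdiff] at hx hx'
        have r1 := cge_succ_mem X.1 hx.1
        have r2 := cge_succ_not_mem X.2 hx.2
        have r1' := cge_succ_mem X.1 hx'.1
        have hm : cge X.1 x ≤ cge X.1 (x'+1) := cge_mono X.1 (by omega)
        have s1 := hX x; have s2 := hX (x+1); have s3 := hX x'
        omega
      · rw [Finset.mem_sdiff] at hx hx'
        have r1 := cge_succ_mem X.2 hx.1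
        have r2 := cge_succ_not_mem X.1 hx.2
        have r1' := cge_succ_mem X.2 hx'.1
        have hm : cge X.2 x ≤ cge X.2 (x'+1) := cge_mono X.2 (by omega)
        have s1 := hX x; have s2 := hX (x+1); have s3 := hX x'
        omega
    have hsplit : cge Y.1 (x+1-sg) < cge Y.1 (x'+1-sg) ∨
        cge Y.2 (x+1-sg) < cge Y.2 (x'+1-sg) := by omega
    rcases hsplit with h | h
    · obtain ⟨u, hu, hu1, hu2⟩ := cge_exists h
      exact ⟨u + sg, hmemEP u (Finset.mem_union_left _ hu), by omega, by omega⟩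
    · obtain ⟨u, hu, hu1, hu2⟩ := cge_exists h
      exact ⟨u + sg, hmemEP u (Finset.mem_union_right _ hu), by omega, by omega⟩
  -- the pair set
  set P : Finset (ℕ × ℕ) :=
    ((X.1 \ X.2) ×ˢ (X.2 \ X.1)).filter
      (fun pr => ∀ p ∈ EP, (p ≤ pr.1 ↔ p ≤ pr.2)) with hPdef
  have hPmem : ∀ pr ∈ P, pr.1 ∈ X.1 \ X.2 ∧ pr.2 ∈ X.2 \ X.1 ∧
      (∀ p ∈ EP, (p ≤ pr.1 ↔ p ≤ pr.2)) := by
    intro pr hpr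
    rw [hPdef, Finset.mem_filter, Finset.mem_product] at hpr
    exact ⟨hpr.1.1, hpr.1.2, hpr.2⟩
  have hPmem' : ∀ pr, pr.1 ∈ X.1 \ X.2 → pr.2 ∈ X.2 \ X.1 →
      (∀ p ∈ EP, (p ≤ pr.1 ↔ p ≤ pr.2)) → pr ∈ P := by
    intro pr h1 h2 h3
    rw [hPdef, Finset.mem_filter, Finset.mem_product]
    exact ⟨⟨h1, h2⟩, h3⟩
  -- injectivity of the band on each kind
  have hinjC : ∀ x x', x ∈ X.1 \ X.2 → x' ∈ X.1 \ X.2 →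
      (∀ p ∈ EP, (p ≤ x ↔ p ≤ x')) → x = x' := by
    intro x x' hx hx' hiff
    rcases lt_trichotomy x x' with h | h | h
    · obtain ⟨p, hp, h1, h2⟩ := hsep x x' h (Or.inl ⟨hx', hx⟩)
      exact absurd ((hiff p hp).mpr h1) h2
    · exact h
    · obtain ⟨p, hp, h1, h2⟩ := hsep x' x h (Or.inl ⟨hx, hx'⟩)
      exact absurd ((hiff p hp).mp h1) h2
  have hinjD : ∀ x x', x ∈ X.2 \ X.1 → x' ∈ X.2 \ X.1 →
      (∀ p ∈ EP, (p ≤ x ↔ p ≤ x')) → x = x' := by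
    intro x x' hx hx' hiff
    rcases lt_trichotomy x x' with h | h | h
    · obtain ⟨p, hp, h1, h2⟩ := hsep x x' h (Or.inr ⟨hx', hx⟩)
      exact absurd ((hiff p hp).mpr h1) h2
    · exact h
    · obtain ⟨p, hp, h1, h2⟩ := hsep x' x h (Or.inr ⟨hx, hx'⟩)
      exact absurd ((hiff p hp).mp h1) h2
  -- consecutive pairs
  have hPcons : ∀ pr ∈ P, ConsecPair X pr.1 pr.2 := by
    intro pr hpr
    obtain ⟨h1, h2, hco⟩ := hPmem pr hpr
    refine ⟨h1, h2, ?_⟩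
    rintro x hx ⟨hxa, hxb⟩
    rw [Finset.mem_union] at hx
    have hne : pr.1 ≠ pr.2 := by
      intro h
      rw [Finset.mem_sdiff] at h1 h2
      exact h2.2 (h ▸ h1.1)
    rcases le_or_gt pr.1 pr.2 with hcd | hcd
    · -- pr.1 < pr.2
      rw [min_eq_left hcd] at hxa
      rw [max_eq_right hcd] at hxb
      rcases hx with hxC | hxD
      · -- x ∈ C, pr.1 < x
        obtain ⟨p, hp, hp1, hp2⟩ := hsep pr.1 x hxa (Or.inl ⟨hxC, h1⟩)
        have : ¬ p ≤ pr.2 := fun hpd => hp2 ((hco p hp).mpr hpd)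
        omega
      · -- x ∈ D, x < pr.2
        obtain ⟨p, hp, hp1, hp2⟩ := hsep x pr.2 hxb (Or.inr ⟨h2, hxD⟩)
        have : p ≤ pr.1 := (hco p hp).mpr hp1
        omega
    · -- pr.2 < pr.1
      rw [min_eq_right (le_of_lt hcd)] at hxa
      rw [max_eq_left (le_of_lt hcd)] at hxb
      rcases hx with hxC | hxD
      · -- x ∈ C, x < pr.1
        obtain ⟨p, hp, hp1, hp2⟩ := hsep x pr.1 hxb (Or.inl ⟨h1, hxC⟩)
        have : p ≤ pr.2 := (hco p hp).mp hp1
        omega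
      · -- x ∈ D, pr.2 < x
        obtain ⟨p, hp, hp1, hp2⟩ := hsep pr.2 x hxa (Or.inr ⟨hxD, h2⟩)
        have : ¬ p ≤ pr.1 := fun hpc => hp2 ((hco p hp).mp hpc)
        omega
  -- distinct coordinates
  have hPdis : ∀ p ∈ P, ∀ q ∈ P, p ≠ q → p.1 ≠ q.1 ∧ p.2 ≠ q.2 := by
    intro p hp q hq hne
    obtain ⟨hp1, hp2, hpco⟩ := hPmem p hp
    obtain ⟨hq1, hq2, hqco⟩ := hPmem q hq
    constructor
    · intro h1
      apply hne
      have h2 : p.2 = q.2 := by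
        apply hinjD p.2 q.2 hp2 hq2
        intro u hu
        rw [← hpco u hu, h1, hqco u hu]
      exact Prod.ext h1 h2
    · intro h2
      apply hne
      have h1 : p.1 = q.1 := by
        apply hinjC p.1 q.1 hp1 hq1
        intro u hu
        rw [hpco u hu, h2, ← hqco u hu]
      exact Prod.ext h1 h2
  refine ⟨P, hPcons, hPdis, ?_⟩
  -- reduction helpers
  have hlow : ∀ t, ∃ p ∈ EP, p ≤ t ∧
      cge Y.1 (t+1-sg) = cge Y.1 (p+1-sg) ∧ cge Y.2 (t+1-sg) = cge Y.2 (p+1-sg) := by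
    intro t
    have hne : (EP.filter (fun p => p ≤ t)).Nonempty :=
      ⟨0, Finset.mem_filter.mpr ⟨h0EP, Nat.zero_le t⟩⟩
    set p0 := (EP.filter (fun p => p ≤ t)).max' hne with hp0def
    have hp0mem := (EP.filter (fun p => p ≤ t)).max'_mem hne
    rw [Finset.mem_filter] at hp0mem
    have hmax : ∀ p ∈ EP, p ≤ t → p ≤ p0 := by
      intro p hp hpt
      rw [hp0def]
      apply Finset.le_max'
      simp only [Finset.mem_filter]
      exact ⟨hp, hpt⟩
    have hcongr : ∀ s : Finset ℕ, s ⊆ Y.1 ∪ Y.2 →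
        cge s (t+1-sg) = cge s (p0+1-sg) := by
      intro s hs
      unfold cge
      congr 1
      apply Finset.filter_congr
      intro y hy
      constructor
      · intro h
        have := hp0mem.2
        omega
      · intro h
        by_contra hc
        have h1 : y + sg ≤ t := by omega
        have h2 := hmax (y+sg) (hmemEP y (hs hy)) h1
        omega
    exact ⟨p0, hp0mem.1, hp0mem.2,
      hcongr Y.1 Finset.subset_union_left, hcongr Y.2 Finset.subset_union_right⟩
  have hhigh : ∀ t, (cge Y.1 t = 0 ∧ cge Y.2 t = 0) ∨
      ∃ q ∈ EP, t + sg ≤ q ∧ cge Y.1 t = cge Y.1 (q - sg) ∧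
        cge Y.2 t = cge Y.2 (q - sg) ∧ q - sg + sg = q := by
    intro t
    rcases (EP.filter (fun p => t + sg ≤ p)).eq_empty_or_nonempty with hFe | hFne
    · left
      have hnone : ∀ y ∈ Y.1 ∪ Y.2, ¬ t ≤ y := by
        intro y hy hty
        have : y + sg ∈ EP.filter (fun p => t + sg ≤ p) :=
          Finset.mem_filter.mpr ⟨hmemEP y hy, by omega⟩
        rw [hFe] at this
        exact absurd this (Finset.notMem_empty _)
      constructor
      · apply Finset.card_eq_zero.mpr
        apply Finset.filter_eq_empty_iff.mpr
        intro y hy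
        exact hnone y (Finset.mem_union_left _ hy)
      · apply Finset.card_eq_zero.mpr
        apply Finset.filter_eq_empty_iff.mpr
        intro y hy
        exact hnone y (Finset.mem_union_right _ hy)
    · right
      set q0 := (EP.filter (fun p => t + sg ≤ p)).min' hFne with hq0def
      have hq0mem := (EP.filter (fun p => t + sg ≤ p)).min'_mem hFne
      rw [Finset.mem_filter] at hq0mem
      have hmin : ∀ p ∈ EP, t + sg ≤ p → q0 ≤ p := by
        intro p hp hpt
        rw [hq0def]
        apply Finset.min'_le
        simp only [Finset.mem_filter]
        exact ⟨hp, hpt⟩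
      have hcongr : ∀ s : Finset ℕ, s ⊆ Y.1 ∪ Y.2 → cge s t = cge s (q0 - sg) := by
        intro s hs
        unfold cge
        congr 1
        apply Finset.filter_congr
        intro y hy
        constructor
        · intro h
          have := hmin (y + sg) (hmemEP y (hs hy)) (by omega)
          omega
        · intro h
          have := hq0mem.2
          omega
      exact ⟨q0, hq0mem.1, hq0mem.2,
        hcongr Y.1 Finset.subset_union_left, hcongr Y.2 Finset.subset_union_right,
        by have := hq0mem.2; omega⟩
  -- the main equivalence
  intro V
  constructor
  · -- membership implies pair description
    rintro ⟨⟨M, hM, rfl⟩, hc1, hc2, hcc⟩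
    have hpinM : ∀ p ∈ EP, cge M.1 p = cge M.2 p := by
      intro p hp
      rw [hEPdef] at hp
      rcases Finset.mem_insert.mp hp with rfl | hp'
      · have l1 := lam_cge1 hM 0
        rw [cge_zero, cge_zero, cge_zero, cge_zero] at l1
        rw [cge_zero, cge_zero]
        omega
      · obtain ⟨u, hu, rfl⟩ := Finset.mem_image.mp hp'
        have he : u + sg + 1 - sg = u + 1 := by omega
        rcases Finset.mem_union.mp hu with hu1 | hu2
        · have hVa := (hcc (u+sg)).1
          rw [he] at hVa
          have hVb := (hcc u).2.1
          have hXa := (hXcc (u+sg)).1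
          rw [he] at hXa
          have hXb := (hXcc u).2.1
          have hY1 := cge_succ_mem Y.1 hu1
          have l2 := lam_cge2 hM (u+sg)
          omega
        · have hVa := (hcc u).2.2.1
          have hVb := (hcc (u+sg)).2.2.2
          rw [he] at hVb
          have hXa := (hXcc u).2.2.1
          have hXb := (hXcc (u+sg)).2.2.2
          rw [he] at hXb
          have hY2 := cge_succ_mem Y.2 hu2
          have l1 := lam_cge1 hM (u+sg)
          omega
    have hmc := matching h0EP hpinM
    have hmd := matching h0EP (fun p hp => (hpinM p hp).symm)
    refine ⟨P.filter (fun pr => pr.1 ∈ M.1), Finset.filter_subset _ _, ?_⟩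
    have hQ1 : M.1 = (P.filter (fun pr => pr.1 ∈ M.1)).image Prod.fst := by
      ext a
      constructor
      · intro ha
        obtain ⟨d, hd, hco⟩ := hmc a ha
        have hpP : (a, d) ∈ P := hPmem' (a, d) (hM.1 ha) (hM.2 hd) hco
        exact Finset.mem_image.mpr ⟨(a, d), Finset.mem_filter.mpr ⟨hpP, ha⟩, rfl⟩
      · intro ha
        obtain ⟨pr, hpr, rfl⟩ := Finset.mem_image.mp ha
        exact (Finset.mem_filter.mp hpr).2
    have hQ2 : M.2 = (P.filter (fun pr => pr.1 ∈ M.1)).image Prod.snd := by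
      ext b
      constructor
      · intro hb
        obtain ⟨c, hc, hco⟩ := hmd b hb
        have hpP : (c, b) ∈ P :=
          hPmem' (c, b) (hM.1 hc) (hM.2 hb) (fun p hp => (hco p hp).symm)
        exact Finset.mem_image.mpr ⟨(c, b), Finset.mem_filter.mpr ⟨hpP, hc⟩, rfl⟩
      · intro hb
        obtain ⟨pr, hpr, rfl⟩ := Finset.mem_image.mp hb
        have hprP := (Finset.mem_filter.mp hpr).1
        have hpr1 : pr.1 ∈ M.1 := (Finset.mem_filter.mp hpr).2
        obtain ⟨h1, h2, hco⟩ := hPmem pr hprP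
        obtain ⟨d, hd, hco'⟩ := hmc pr.1 hpr1
        have heq : pr.2 = d := by
          apply hinjD pr.2 d h2 (hM.2 hd)
          intro p hp
          rw [← hco p hp, hco' p hp]
        rw [heq]
        exact hd
    rw [← hQ1, ← hQ2]
  · -- pair description implies membership
    rintro ⟨Q, hQP, rfl⟩
    have hQmem : ∀ pr ∈ Q, pr.1 ∈ X.1 \ X.2 ∧ pr.2 ∈ X.2 \ X.1 ∧
        (∀ p ∈ EP, (p ≤ pr.1 ↔ p ≤ pr.2)) := fun pr hpr => hPmem pr (hQP hpr)
    set MQ : Symb := (Q.image Prod.fst, Q.image Prod.snd) with hMQdef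
    have hMsub : SubZI MQ X := by
      constructor
      · intro a ha
        obtain ⟨pr, hpr, rfl⟩ := Finset.mem_image.mp ha
        exact (hQmem pr hpr).1
      · intro a ha
        obtain ⟨pr, hpr, rfl⟩ := Finset.mem_image.mp ha
        exact (hQmem pr hpr).2.1
    have hMQ1 : MQ.1 = Q.image Prod.fst := rfl
    have hMQ2 : MQ.2 = Q.image Prod.snd := rfl
    have hpinQ : ∀ p ∈ EP, cge MQ.1 p = cge MQ.2 p := by
      intro p hp
      have e1 : (Q.image Prod.fst).filter (fun y => p ≤ y)
          = (Q.filter (fun pr => p ≤ pr.1)).image Prod.fst := by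
        ext a
        simp only [Finset.mem_filter, Finset.mem_image]
        constructor
        · rintro ⟨⟨pr, hpr, rfl⟩, hple⟩
          exact ⟨pr, ⟨hpr, hple⟩, rfl⟩
        · rintro ⟨pr, ⟨hpr, hple⟩, rfl⟩
          exact ⟨⟨pr, hpr, rfl⟩, hple⟩
      have e2 : (Q.image Prod.snd).filter (fun y => p ≤ y)
          = (Q.filter (fun pr => p ≤ pr.2)).image Prod.snd := by
        ext a
        simp only [Finset.mem_filter, Finset.mem_image]
        constructor
        · rintro ⟨⟨pr, hpr, rfl⟩, hple⟩
          exact ⟨pr, ⟨hpr, hple⟩, rfl⟩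
        · rintro ⟨pr, ⟨hpr, hple⟩, rfl⟩
          exact ⟨⟨pr, hpr, rfl⟩, hple⟩
      have hinj1 : Set.InjOn Prod.fst ((Q.filter (fun pr => p ≤ pr.1) : Finset (ℕ × ℕ)) : Set (ℕ × ℕ)) := by
        intro a ha b hb hab
        simp only [Finset.coe_filter, Set.mem_setOf_eq] at ha hb
        by_contra hne
        exact (hPdis a (hQP ha.1) b (hQP hb.1) hne).1 hab
      have hinj2 : Set.InjOn Prod.snd ((Q.filter (fun pr => p ≤ pr.2) : Finset (ℕ × ℕ)) : Set (ℕ × ℕ)) := by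
        intro a ha b hb hab
        simp only [Finset.coe_filter, Set.mem_setOf_eq] at ha hb
        by_contra hne
        exact (hPdis a (hQP ha.1) b (hQP hb.1) hne).2 hab
      have hfeq : Q.filter (fun pr => p ≤ pr.1) = Q.filter (fun pr => p ≤ pr.2) := by
        apply Finset.filter_congr
        intro pr hpr
        exact ⟨fun h => ((hQmem pr hpr).2.2 p hp).mp h,
               fun h => ((hQmem pr hpr).2.2 p hp).mpr h⟩
      rw [hMQ1, hMQ2]
      unfold cge
      rw [e1, e2, Finset.card_image_of_injOn hinj1, Finset.card_image_of_injOn hinj2, hfeq]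
    have hVpin : ∀ p ∈ EP, cge (lam X MQ).1 p = cge X.1 p ∧
        cge (lam X MQ).2 p = cge X.2 p := by
      intro p hp
      have l1 := lam_cge1 hMsub p
      have l2 := lam_cge2 hMsub p
      have := hpinQ p hp
      omega
    refine ⟨⟨MQ, hMsub, rfl⟩, ?_, ?_, ?_⟩
    · rw [← cge_zero, ← cge_zero]
      exact (hVpin 0 h0EP).1
    · rw [← cge_zero, ← cge_zero]
      exact (hVpin 0 h0EP).2
    · intro t
      refine ⟨?_, ?_, ?_, ?_⟩
      · obtain ⟨p0, hp0, hp0t, he1, _⟩ := hlow t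
        calc cge (lam X MQ).2 t ≤ cge (lam X MQ).2 p0 := cge_mono _ hp0t
          _ = cge X.2 p0 := (hVpin p0 hp0).2
          _ ≤ cge Y.1 (p0+1-sg) := (hXcc p0).1
          _ = cge Y.1 (t+1-sg) := he1.symm
      · rcases hhigh t with ⟨h1, _⟩ | ⟨q0, hq0, hq0t, he1, _, heq⟩
        · omega
        · calc cge Y.1 t = cge Y.1 (q0 - sg) := he1
            _ ≤ cge X.2 (q0 - sg + sg) + 1 := (hXcc (q0 - sg)).2.1
            _ = cge X.2 q0 + 1 := by rw [heq]
            _ = cge (lam X MQ).2 q0 + 1 := by rw [(hVpin q0 hq0).2]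
            _ ≤ cge (lam X MQ).2 (t + sg) + 1 := by
                have := cge_mono (lam X MQ).2 (show t + sg ≤ q0 from hq0t)
                omega
      · rcases hhigh t with ⟨_, h2⟩ | ⟨q0, hq0, hq0t, _, he2, heq⟩
        · omega
        · calc cge Y.2 t = cge Y.2 (q0 - sg) := he2
            _ ≤ cge X.1 (q0 - sg + sg) := (hXcc (q0 - sg)).2.2.1
            _ = cge X.1 q0 := by rw [heq]
            _ = cge (lam X MQ).1 q0 := by rw [(hVpin q0 hq0).1]
            _ ≤ cge (lam X MQ).1 (t + sg) := cge_mono _ hq0t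
      · obtain ⟨p0, hp0, hp0t, _, he2⟩ := hlow t
        calc cge (lam X MQ).1 t ≤ cge (lam X MQ).1 p0 := cge_mono _ hp0t
          _ = cge X.1 p0 := (hVpin p0 hp0).1
          _ ≤ cge Y.2 (p0+1-sg) + 1 := (hXcc p0).2.2.2
          _ = cge Y.2 (t+1-sg) + 1 := by rw [he2]

lemma spec1_cge {Z : Symb} {m : ℕ} (h : IsSpecial1 Z m) (t : ℕ) :
    cge Z.2 t ≤ cge Z.1 t ∧ cge Z.1 t ≤ cge Z.2 t + 1 :=
  ⟨geFwd (by rw [h.1, h.2.1]; omega) h.2.2.1 t,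
   shFwd (by rw [h.1, h.2.1]) h.2.2.2 t⟩

lemma spec0_cge {Z : Symb} {m : ℕ} (h : IsSpecial0 Z m) (t : ℕ) :
    cge Z.2 t ≤ cge Z.1 t ∧ cge Z.1 t ≤ cge Z.2 t + 1 :=
  ⟨geFwd (by rw [h.1, h.2.1]) h.2.2.1 t,
   shFwd (by rw [h.1, h.2.1]; omega) h.2.2.2 t⟩

lemma transl1 {L L' : Symb} {m : ℕ} (hL1 : L.1.card = m + 1) (hL2 : L.2.card = m)
    (hL1' : L'.1.card = m) (hL2' : L'.2.card = m) (hB : Bm L L') : CCf 0 L L' := by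
  intro t
  have c1 := gtFwd (by omega) hB.2.2.1 t
  have c2 := shFwd (by omega) hB.2.2.2.1 t
  have c3 := geFwd (by omega) hB.2.2.2.2.2 t
  have c4 := shgtFwd (by omega) hB.2.2.2.2.1 t
  exact ⟨by simpa using c1, by simpa using c2, by simpa using c3, by simpa using c4⟩

lemma transl1_rev {L L' : Symb} (h1 : L'.1.card = L.2.card)
    (h2 : L'.2.card + 1 = L.1.card) (hcc : CCf 0 L L') : Bm L L' := by
  refine ⟨h1, h2, ?_, ?_, ?_, ?_⟩
  · exact gtBwd (fun t => by simpa using (hcc t).1)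
  · exact shBwd (fun t => by simpa using (hcc t).2.1)
  · exact shgtBwd (fun t => by simpa using (hcc t).2.2.2)
  · exact geBwd (fun t => by simpa using (hcc t).2.2.1)

lemma transl2 {L L' : Symb} {m : ℕ} (hL1 : L.1.card = m + 1) (hL2 : L.2.card = m)
    (hL1' : L'.1.card = m + 1) (hL2' : L'.2.card = m + 1) (hB : Bm1 L L') : CCf 1 L L' := by
  intro t
  have c1 := geFwd (by omega) hB.2.2.1 t
  have c2 := shgtFwd (by omega) hB.2.2.2.1 t
  have c3 := gtFwd (by omega) hB.2.2.2.2.2 t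
  have c4 := shFwd (by omega) hB.2.2.2.2.1 t
  exact ⟨by simpa using c1, by simpa using c2, by simpa using c3, by simpa using c4⟩

lemma transl2_rev {L L' : Symb} (h1 : L'.1.card = L.2.card + 1)
    (h2 : L'.2.card = L.1.card) (hcc : CCf 1 L L') : Bm1 L L' := by
  refine ⟨h1, h2, ?_, ?_, ?_, ?_⟩
  · exact geBwd (fun t => by simpa using (hcc t).1)
  · exact shgtBwd (fun t => by simpa using (hcc t).2.1)
  · exact shBwd (fun t => by simpa using (hcc t).2.2.2)
  · exact gtBwd (fun t => by simpa using (hcc t).2.2.1)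
theorem stmt3 (m m' : ℕ) (Z Z' : Symb) (hm : m' = m ∨ m' = m + 1)
    (hZ : IsSpecial1 Z m) (hZ' : IsSpecial0 Z' m')
    (hD : ∃ A A' : Symb, DRel Z Z' m m' A A') :
    (∃ P : Finset (ℕ × ℕ),
      (∀ p ∈ P, ConsecPair Z' p.1 p.2) ∧
      (∀ p ∈ P, ∀ q ∈ P, p ≠ q → p.1 ≠ q.1 ∧ p.2 ≠ q.2) ∧
      {Λ' | DRel Z Z' m m' Z Λ'} =
        {Λ' : Symb | ∃ Q ⊆ P, Λ' = lam Z' (Q.image Prod.fst, Q.image Prod.snd)}) ∧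
    (∃ P : Finset (ℕ × ℕ),
      (∀ p ∈ P, ConsecPair Z p.1 p.2) ∧
      (∀ p ∈ P, ∀ q ∈ P, p ≠ q → p.1 ≠ q.1 ∧ p.2 ≠ q.2) ∧
      {Λ | DRel Z Z' m m' Λ Z'} =
        {Λ : Symb | ∃ Q ⊆ P, Λ = lam Z (Q.image Prod.fst, Q.image Prod.snd)}) := by
  obtain ⟨A, A', hDA⟩ := hD
  obtain ⟨⟨hASb, hA'Sb, hdisj⟩, hA1, hA2, hA'1, hA'2⟩ := hDA
  obtain ⟨M0, hM0, hAeq⟩ := hASb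
  obtain ⟨N0, hN0, hA'eq⟩ := hA'Sb
  have hspZ := spec1_cge hZ
  have hspZ' := spec0_cge hZ'
  rcases hm with hmc | hmc
  · -- case m' = m
    subst hmc
    have hZ1 := hZ.1
    have hZ2 := hZ.2.1
    have hZ'1 := hZ'.1
    have hZ'2 := hZ'.2.1
    have hBmA : Bm A A' := by
      rcases hdisj with ⟨_, h⟩ | ⟨h, _⟩
      · exact h
      · omega
    have hccA : CCf 0 A A' := transl1 hA1 hA2 hA'1 hA'2 hBmA
    constructor
    · -- part (i) : vary Λ', X := Z', Y := Z, sg = 0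
      have hex : ∃ M N, SubZI M Z' ∧ SubZI N Z ∧ CCf 0 (lam Z N) (lam Z' M) := by
        refine ⟨N0, M0, hN0, hM0, ?_⟩
        rw [← hAeq, ← hA'eq]
        exact hccA
      obtain ⟨P, hP1, hP2, hP3⟩ := core 0 (by omega) Z' Z hspZ' hspZ hex
      refine ⟨P, hP1, hP2, ?_⟩
      ext L'
      simp only [Set.mem_setOf_eq]
      constructor
      · rintro ⟨⟨hZSb, hL'Sb, hdis⟩, h1, h2, h3, h4⟩
        have hBmL : Bm Z L' := by
          rcases hdis with ⟨_, h⟩ | ⟨h, _⟩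
          · exact h
          · omega
        have hcc : CCf 0 Z L' := transl1 h1 h2 h3 h4 hBmL
        exact (hP3 L').mp ⟨hL'Sb, by omega, by omega, hcc⟩
      · intro hQ
        obtain ⟨hL'Sb, hc1, hc2, hcc⟩ := (hP3 L').mpr hQ
        refine ⟨⟨self_mem_Sbar Z, hL'Sb,
          Or.inl ⟨rfl, transl1_rev (by omega) (by omega) hcc⟩⟩,
          hZ1, hZ2, by omega, by omega⟩
    · -- part (ii) : vary Λ, X := Z, Y := Z', sg = 1
      have hex : ∃ M N, SubZI M Z ∧ SubZI N Z' ∧ CCf 1 (lam Z' N) (lam Z M) := by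
        refine ⟨M0, N0, hM0, hN0, ?_⟩
        rw [← hAeq, ← hA'eq]
        exact CCf_swap (by omega) hccA
      obtain ⟨P, hP1, hP2, hP3⟩ := core 1 (by omega) Z Z' hspZ hspZ' hex
      refine ⟨P, hP1, hP2, ?_⟩
      ext L
      simp only [Set.mem_setOf_eq]
      constructor
      · rintro ⟨⟨hLSb, hZ'Sb, hdis⟩, h1, h2, h3, h4⟩
        have hBmL : Bm L Z' := by
          rcases hdis with ⟨_, h⟩ | ⟨h, _⟩
          · exact h
          · omega
        have hcc : CCf 1 Z' L := CCf_swap (by omega) (transl1 h1 h2 h3 h4 hBmL)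
        exact (hP3 L).mp ⟨hLSb, by omega, by omega, hcc⟩
      · intro hQ
        obtain ⟨hLSb, hc1, hc2, hcc⟩ := (hP3 L).mpr hQ
        have hcc' : CCf 0 L Z' := CCf_swap (by omega) hcc
        refine ⟨⟨hLSb, self_mem_Sbar Z',
          Or.inl ⟨rfl, transl1_rev (by omega) (by omega) hcc'⟩⟩,
          by omega, by omega, hZ'1, hZ'2⟩
  · -- case m' = m + 1
    subst hmc
    have hZ1 := hZ.1
    have hZ2 := hZ.2.1
    have hZ'1 := hZ'.1
    have hZ'2 := hZ'.2.1
    have hBmA : Bm1 A A' := by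
      rcases hdisj with ⟨h, _⟩ | ⟨_, h⟩
      · omega
      · exact h
    have hccA : CCf 1 A A' := transl2 hA1 hA2 hA'1 hA'2 hBmA
    constructor
    · -- part (i) : X := Z', Y := Z, sg = 1
      have hex : ∃ M N, SubZI M Z' ∧ SubZI N Z ∧ CCf 1 (lam Z N) (lam Z' M) := by
        refine ⟨N0, M0, hN0, hM0, ?_⟩
        rw [← hAeq, ← hA'eq]
        exact hccA
      obtain ⟨P, hP1, hP2, hP3⟩ := core 1 (by omega) Z' Z hspZ' hspZ hex
      refine ⟨P, hP1, hP2, ?_⟩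
      ext L'
      simp only [Set.mem_setOf_eq]
      constructor
      · rintro ⟨⟨hZSb, hL'Sb, hdis⟩, h1, h2, h3, h4⟩
        have hBmL : Bm1 Z L' := by
          rcases hdis with ⟨h, _⟩ | ⟨_, h⟩
          · omega
          · exact h
        have hcc : CCf 1 Z L' := transl2 h1 h2 h3 h4 hBmL
        exact (hP3 L').mp ⟨hL'Sb, by omega, by omega, hcc⟩
      · intro hQ
        obtain ⟨hL'Sb, hc1, hc2, hcc⟩ := (hP3 L').mpr hQ
        refine ⟨⟨self_mem_Sbar Z, hL'Sb,
          Or.inr ⟨rfl, transl2_rev (by omega) (by omega) hcc⟩⟩,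
          hZ1, hZ2, by omega, by omega⟩
    · -- part (ii) : X := Z, Y := Z', sg = 0
      have hex : ∃ M N, SubZI M Z ∧ SubZI N Z' ∧ CCf 0 (lam Z' N) (lam Z M) := by
        refine ⟨M0, N0, hM0, hN0, ?_⟩
        rw [← hAeq, ← hA'eq]
        exact CCf_swap (by omega) hccA
      obtain ⟨P, hP1, hP2, hP3⟩ := core 0 (by omega) Z Z' hspZ hspZ' hex
      refine ⟨P, hP1, hP2, ?_⟩
      ext L
      simp only [Set.mem_setOf_eq]
      constructor
      · rintro ⟨⟨hLSb, hZ'Sb, hdis⟩, h1, h2, h3, h4⟩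
        have hBmL : Bm1 L Z' := by
          rcases hdis with ⟨h, _⟩ | ⟨_, h⟩
          · omega
          · exact h
        have hcc : CCf 0 Z' L := CCf_swap (by omega) (transl2 h1 h2 h3 h4 hBmL)
        exact (hP3 L).mp ⟨hLSb, by omega, by omega, hcc⟩
      · intro hQ
        obtain ⟨hLSb, hc1, hc2, hcc⟩ := (hP3 L).mpr hQ
        have hcc' : CCf 1 L Z' := CCf_swap (by omega) hcc
        refine ⟨⟨hLSb, self_mem_Sbar Z',
          Or.inr ⟨rfl, transl2_rev (by omega) (by omega) hcc'⟩⟩,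
          by omega, by omega, hZ'1, hZ'2⟩
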